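/- arXiv:2408.08457 — 2 statements merged into one kernel-verified Lean document; each statement's English description precedes it below -/
import Mathlib

section
/- (Decision tree colored-percolation inequality.) Let E be a finite set. In the generalized decision-tree model, take Ω₁(e)={(x,y,z)∈{0,1}³ : x⊕y⊕z=0}={000,011,101,110} with μ₁(e) uniform (probability 1/4 each), and Ω₂(e)={0,1}³ with μ₂(e) uniform (probability 1/8 each). For closed-upward events U,V,W ⊆ {0,1}^E, let U×V×W denote the event that the configuration of first coordinates of C lies in U, the configuration of second coordinates lies in V, and the configuration of third coordinates lies in W. Then for every generating decision tree T with random output configuration C, P(C₁∈U×V×W) ≤ P(C∈U×V×W) ≤ P(C₂∈U×V×W), where C₁ has distribution Π_e μ₁(e) and C₂ has distribution Π_e μ₂(e). -/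
namespace GenDT

/-- A generating decision tree: every node queries an edge and either samples its value
from the first probability space (`node1`) or the second one (`node2`), with one child
for each possible sampled value. -/
inductive GTree (E : Type u) (Ω₁ : E → Type v) (Ω₂ : E → Type w) : Type (max u v w)
  | leaf : GTree E Ω₁ Ω₂
  | node1 (e : E) (child : Ω₁ e → GTree E Ω₁ Ω₂) : GTree E Ω₁ Ω₂
  | node2 (e : E) (child : Ω₂ e → GTree E Ω₁ Ω₂) : GTree E Ω₁ Ω₂

variable {E : Type*} [Fintype E] [DecidableEq E] {Ω₁ : E → Type*} {Ω₂ : E → Type*}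
  [∀ e, Fintype (Ω₁ e)] [∀ e, Fintype (Ω₂ e)]

/-- Along each root-to-leaf path, every edge of `rem` is queried exactly once. -/
def GTree.complete : GTree E Ω₁ Ω₂ → Finset E → Prop
  | .leaf, rem => rem = ∅
  | .node1 e child, rem => e ∈ rem ∧ ∀ x, (child x).complete (rem.erase e)
  | .node2 e child, rem => e ∈ rem ∧ ∀ x, (child x).complete (rem.erase e)

/-- The probability that the run of the tree outputs exactly the configuration `C`,
when values at `node1`/`node2` nodes are sampled independently with mass functions
`m₁`/`m₂`. -/
def GTree.mass (m₁ : ∀ e, Ω₁ e → ℝ) (m₂ : ∀ e, Ω₂ e → ℝ) :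
    GTree E Ω₁ Ω₂ → (∀ e, Ω₁ e ⊕ Ω₂ e) → ℝ
  | .leaf, _ => 1
  | .node1 e child, C =>
      match C e with
      | .inl x => m₁ e x * (child x).mass m₁ m₂ C
      | .inr _ => 0
  | .node2 e child, C =>
      match C e with
      | .inl _ => 0
      | .inr x => m₂ e x * (child x).mass m₁ m₂ C

/-- Mass function of `C₁`, the configuration sampled entirely from the first spaces. -/
def mass1 (m₁ : ∀ e, Ω₁ e → ℝ) (C : ∀ e, Ω₁ e ⊕ Ω₂ e) : ℝ :=
  ∏ e, match C e with
       | .inl x => m₁ e x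
       | .inr _ => 0

/-- Mass function of `C₂`, the configuration sampled entirely from the second spaces. -/
def mass2 (m₂ : ∀ e, Ω₂ e → ℝ) (C : ∀ e, Ω₁ e ⊕ Ω₂ e) : ℝ :=
  ∏ e, match C e with
       | .inl _ => 0
       | .inr x => m₂ e x

/-- Probability of an event under a mass function on a finite configuration space. -/
noncomputable def PrOf {Ω : Type*} [Fintype Ω] (mass : Ω → ℝ) (A : Set Ω) : ℝ :=
  ∑ x : Ω, A.indicator mass x

/-- An event of configurations in `{0,1}^E` is closed upward if it is preserved by
turning more coordinates to `true`. -/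
def UpwardClosed (A : Set (E → Bool)) : Prop :=
  ∀ C₁ C₂ : E → Bool, C₁ ∈ A → (∀ e, C₁ e = true → C₂ e = true) → C₂ ∈ A

/-- Triples of bits. -/
abbrev B3 : Type := Bool × Bool × Bool

/-- Triples of bits with xor equal to `0`: `{000, 011, 101, 110}`. -/
abbrev XorZero : Type := {x : B3 // xor x.1 (xor x.2.1 x.2.2) = false}

/-- The triple of bits carried by a value of `Ω₁(e) ⊔ Ω₂(e)`. -/
def bits : XorZero ⊕ B3 → B3
  | .inl x => x.1
  | .inr x => x

/-- `μ₁(e)`: uniform on the four xor-zero triples. -/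
noncomputable def massXor : (e : E) → XorZero → ℝ := fun _ _ => 1 / 4

/-- `μ₂(e)`: uniform on all eight triples. -/
noncomputable def massAll : (e : E) → B3 → ℝ := fun _ _ => 1 / 8

/-- The event `U × V × W`: the configurations of first, second and third coordinates
lie in `U`, `V` and `W` respectively. -/
def CoordEvent₃ (U V W : Set (E → Bool)) : Set (E → XorZero ⊕ B3) :=
  {C | (fun e => (bits (C e)).1) ∈ U ∧ (fun e => (bits (C e)).2.1) ∈ V ∧
       (fun e => (bits (C e)).2.2) ∈ W}

/-! ### Auxiliary machinery -/

section Aux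

set_option linter.unusedSectionVars false
set_option linter.unusedVariables false
attribute [local instance] Classical.propDecidable

abbrev Val : Type := XorZero ⊕ B3

variable {E : Type*} [Fintype E] [DecidableEq E]

lemma upd_split (e : E) (v u : Val) (r : {j // j ≠ e} → Val) :
    Function.update ((Equiv.funSplitAt e Val).symm (u, r)) e v
      = (Equiv.funSplitAt e Val).symm (v, r) := by
  funext j
  by_cases h : j = e
  · subst h; simp [Equiv.funSplitAt, Equiv.piSplitAt]
  · simp [Function.update, h, Equiv.funSplitAt, Equiv.piSplitAt]

lemma sum_update (f : (E → Val) → ℝ) (e : E) :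
    ∑ v : Val, ∑ C : E → Val, f (Function.update C e v) = 12 * ∑ C : E → Val, f C := by
  have key : ∀ g : (E → Val) → ℝ,
      ∑ C : E → Val, g C = ∑ p : Val × ({j // j ≠ e} → Val), g ((Equiv.funSplitAt e Val).symm p) :=
    fun g => (Equiv.sum_comp (Equiv.funSplitAt e Val).symm g).symm
  calc ∑ v : Val, ∑ C : E → Val, f (Function.update C e v)
      = ∑ v : Val, ∑ p : Val × ({j // j ≠ e} → Val),
          f ((Equiv.funSplitAt e Val).symm (v, p.2)) := by
        refine Finset.sum_congr rfl fun v _ => ?_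
        rw [key (fun C => f (Function.update C e v))]
        exact Finset.sum_congr rfl fun p _ => by rw [upd_split]
    _ = ∑ v : Val, ∑ u : Val, ∑ r : {j // j ≠ e} → Val,
          f ((Equiv.funSplitAt e Val).symm (v, r)) := by
        refine Finset.sum_congr rfl fun v _ => ?_
        rw [Fintype.sum_prod_type]
    _ = ∑ v : Val, (12 : ℝ) * ∑ r : {j // j ≠ e} → Val,
          f ((Equiv.funSplitAt e Val).symm (v, r)) := by
        refine Finset.sum_congr rfl fun v _ => ?_
        rw [Finset.sum_const, Finset.card_univ, show Fintype.card Val = 12 from rfl,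
          nsmul_eq_mul]
        norm_num
    _ = 12 * ∑ p : Val × ({j // j ≠ e} → Val), f ((Equiv.funSplitAt e Val).symm p) := by
        rw [← Finset.mul_sum, Fintype.sum_prod_type]
    _ = 12 * ∑ C : E → Val, f C := by rw [← key]

/-- Per-edge weight for `μ₁`. -/
noncomputable def m1e : Val → ℝ := Sum.elim (fun _ => 1/4) (fun _ => 0)
/-- Per-edge weight for `μ₂`. -/
noncomputable def m2e : Val → ℝ := Sum.elim (fun _ => 0) (fun _ => 1/8)

/-- Product weight over a set of remaining edges. -/
noncomputable def wOf (μ : Val → ℝ) (rem : Finset E) (C : E → Val) : ℝ :=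
  ∏ e ∈ rem, μ (C e)

lemma wOf_nonneg {μ : Val → ℝ} (hμ : ∀ v, 0 ≤ μ v) (rem : Finset E) (C : E → Val) :
    0 ≤ wOf μ rem C :=
  Finset.prod_nonneg fun _ _ => hμ _

lemma m1e_nonneg : ∀ v : Val, 0 ≤ m1e v := by rintro (x | y) <;> norm_num [m1e]
lemma m2e_nonneg : ∀ v : Val, 0 ≤ m2e v := by rintro (x | y) <;> norm_num [m2e]

lemma mass1_eq : mass1 (massXor (E := E)) = wOf m1e Finset.univ := by
  funext C
  refine Finset.prod_congr rfl fun e _ => ?_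
  rcases h : C e with x | y <;> simp [h, m1e, massXor]

lemma mass2_eq : mass2 (massAll (E := E)) = wOf m2e Finset.univ := by
  funext C
  refine Finset.prod_congr rfl fun e _ => ?_
  rcases h : C e with x | y <;> simp [h, m2e, massAll]

/-- Conditioning an event on the value `b` at edge `e`. -/
def condS (A : Set (E → Bool)) (e : E) (b : Bool) : Set (E → Bool) :=
  {f | Function.update f e b ∈ A}

lemma condS_upward {A : Set (E → Bool)} (hA : UpwardClosed A) (e : E) (b : Bool) :
    UpwardClosed (condS A e b) := by
  intro f g hf hfg
  refine hA _ _ hf fun e' he' => ?_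
  by_cases h : e' = e
  · subst h; simpa [Function.update_self] using he'
  · simp only [Function.update_of_ne h] at he' ⊢; exact hfg _ he'

lemma condS_mono {A : Set (E → Bool)} (hA : UpwardClosed A) (e : E) :
    condS A e false ⊆ condS A e true := by
  intro f hf
  refine hA _ _ hf fun e' he' => ?_
  by_cases h : e' = e
  · subst h; simp [Function.update_self]
  · simp only [Function.update_of_ne h] at he' ⊢; exact he'

lemma upd_coord1 (C : E → Val) (e : E) (v : Val) :
    (fun e' => (bits (Function.update C e v e')).1)
      = Function.update (fun e' => (bits (C e')).1) e (bits v).1 := by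
  funext e'
  by_cases h : e' = e
  · subst h; simp
  · simp [Function.update_of_ne h]

lemma upd_coord2 (C : E → Val) (e : E) (v : Val) :
    (fun e' => (bits (Function.update C e v e')).2.1)
      = Function.update (fun e' => (bits (C e')).2.1) e (bits v).2.1 := by
  funext e'
  by_cases h : e' = e
  · subst h; simp
  · simp [Function.update_of_ne h]

lemma upd_coord3 (C : E → Val) (e : E) (v : Val) :
    (fun e' => (bits (Function.update C e v e')).2.2)
      = Function.update (fun e' => (bits (C e')).2.2) e (bits v).2.2 := by
  funext e'
  by_cases h : e' = e
  · subst h; simp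
  · simp [Function.update_of_ne h]

lemma mem_CE_update {U V W : Set (E → Bool)} (C : E → Val) (e : E) (v : Val) :
    Function.update C e v ∈ CoordEvent₃ U V W ↔
      C ∈ CoordEvent₃ (condS U e (bits v).1) (condS V e (bits v).2.1)
        (condS W e (bits v).2.2) := by
  simp only [CoordEvent₃, Set.mem_setOf_eq, condS, upd_coord1, upd_coord2, upd_coord3]

lemma wOf_update_not_mem (μ : Val → ℝ) {rem : Finset E} {e : E} (he : e ∉ rem)
    (C : E → Val) (v : Val) : wOf μ rem (Function.update C e v) = wOf μ rem C := by
  refine Finset.prod_congr rfl fun e' he' => ?_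
  have : e' ≠ e := fun h => he (h ▸ he')
  rw [Function.update_of_ne this]

lemma wOf_update_mem (μ : Val → ℝ) {rem : Finset E} {e : E} (he : e ∈ rem)
    (C : E → Val) (v : Val) :
    wOf μ rem (Function.update C e v) = μ v * wOf μ (rem.erase e) C := by
  rw [wOf, ← Finset.mul_prod_erase _ _ he, Function.update_self]
  congr 1
  exact wOf_update_not_mem μ (Finset.notMem_erase e rem) C v

lemma mem_CE_update_inl {U V W : Set (E → Bool)} (C : E → Val) (e : E) (x : XorZero) :
    Function.update C e (Sum.inl x) ∈ CoordEvent₃ U V W ↔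
      C ∈ CoordEvent₃ (condS U e x.1.1) (condS V e x.1.2.1) (condS W e x.1.2.2) :=
  mem_CE_update C e (Sum.inl x)

lemma mem_CE_update_inr {U V W : Set (E → Bool)} (C : E → Val) (e : E) (y : B3) :
    Function.update C e (Sum.inr y) ∈ CoordEvent₃ U V W ↔
      C ∈ CoordEvent₃ (condS U e y.1) (condS V e y.2.1) (condS W e y.2.2) :=
  mem_CE_update C e (Sum.inr y)

@[simp] lemma bits_inl (x : XorZero) : bits (Sum.inl x) = x.1 := rfl
@[simp] lemma bits_inr (y : B3) : bits (Sum.inr y) = y := rfl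

/-- One-edge decomposition of the product-weight probability. -/
lemma step (μ : Val → ℝ) {rem : Finset E} {e : E} (he : e ∈ rem) (U V W : Set (E → Bool)) :
    12 * PrOf (wOf μ rem) (CoordEvent₃ U V W) =
      ∑ v : Val, μ v * PrOf (wOf μ (rem.erase e))
        (CoordEvent₃ (condS U e (bits v).1) (condS V e (bits v).2.1)
          (condS W e (bits v).2.2)) := by
  rw [PrOf, ← sum_update (fun C => (CoordEvent₃ U V W).indicator (wOf μ rem) C) e]
  refine Finset.sum_congr rfl fun v _ => ?_
  rw [PrOf, Finset.mul_sum]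
  refine Finset.sum_congr rfl fun C _ => ?_
  by_cases h : Function.update C e v ∈ CoordEvent₃ U V W
  · rw [Set.indicator_of_mem h, Set.indicator_of_mem ((mem_CE_update C e v).1 h),
      wOf_update_mem μ he]
  · rw [Set.indicator_of_notMem h,
      Set.indicator_of_notMem (fun hc => h ((mem_CE_update C e v).2 hc))]
    ring

/-- The mass of a tree that never queries `e` does not depend on the value at `e`. -/
lemma mass_update_of_complete (T : GTree E (fun _ => XorZero) (fun _ => B3)) :
    ∀ S : Finset E, T.complete S → ∀ e : E, e ∉ S → ∀ (C : E → Val) (v : Val),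
      T.mass massXor massAll (Function.update C e v) = T.mass massXor massAll C := by
  induction T with
  | leaf => intro S hS e he C v; rfl
  | node1 e' child ih =>
      intro S hS e he C v
      obtain ⟨he', hc⟩ := hS
      have hne : e' ≠ e := fun h => he (h ▸ he')
      simp only [GTree.mass, Function.update_of_ne hne]
      rcases h : C e' with x | y
      · simp only [h]
        rw [ih x (S.erase e') (hc x) e (fun hx => he (Finset.mem_of_mem_erase hx)) C v]
      · simp only [h]
  | node2 e' child ih =>
      intro S hS e he C v
      obtain ⟨he', hc⟩ := hS
      have hne : e' ≠ e := fun h => he (h ▸ he')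
      simp only [GTree.mass, Function.update_of_ne hne]
      rcases h : C e' with x | y
      · simp only [h]
      · simp only [h]
        rw [ih y (S.erase e') (hc y) e (fun hx => he (Finset.mem_of_mem_erase hx)) C v]

/-- One-edge decomposition of the tree probability at a `node1`. -/
lemma step_node1 {rem : Finset E} (e : E)
    (child : XorZero → GTree E (fun _ => XorZero) (fun _ => B3))
    (hc : ∀ x, (child x).complete (rem.erase e)) (U V W : Set (E → Bool)) :
    12 * PrOf ((GTree.node1 e child).mass massXor massAll) (CoordEvent₃ U V W)
      = ∑ x : XorZero, (1/4 : ℝ) * PrOf ((child x).mass massXor massAll)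
          (CoordEvent₃ (condS U e x.1.1) (condS V e x.1.2.1) (condS W e x.1.2.2)) := by
  rw [PrOf, ← sum_update
    (fun C => (CoordEvent₃ U V W).indicator ((GTree.node1 e child).mass massXor massAll) C) e,
    Fintype.sum_sum_type]
  have hinr : ∀ y : B3, ∑ C : E → Val, (CoordEvent₃ U V W).indicator
      ((GTree.node1 e child).mass massXor massAll) (Function.update C e (Sum.inr y)) = 0 := by
    intro y
    refine Finset.sum_eq_zero fun C _ => ?_
    by_cases h : Function.update C e (Sum.inr y) ∈ CoordEvent₃ U V W
    · rw [Set.indicator_of_mem h]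
      simp [GTree.mass]
    · rw [Set.indicator_of_notMem h]
  rw [Finset.sum_congr rfl fun y (_ : y ∈ Finset.univ) => hinr y, Finset.sum_const_zero, add_zero]
  refine Finset.sum_congr rfl fun x _ => ?_
  rw [PrOf, Finset.mul_sum]
  refine Finset.sum_congr rfl fun C _ => ?_
  by_cases h : Function.update C e (Sum.inl x) ∈ CoordEvent₃ U V W
  · rw [Set.indicator_of_mem h,
      Set.indicator_of_mem (show C ∈ _ from (mem_CE_update_inl C e x).1 h)]
    simp only [GTree.mass, Function.update_self]
    rw [mass_update_of_complete (child x) (rem.erase e) (hc x) e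
      (Finset.notMem_erase e rem) C (Sum.inl x)]
    norm_num [massXor]
  · rw [Set.indicator_of_notMem h,
      Set.indicator_of_notMem
        (fun hcon => h ((mem_CE_update_inl C e x).2 hcon))]
    ring

/-- One-edge decomposition of the tree probability at a `node2`. -/
lemma step_node2 {rem : Finset E} (e : E)
    (child : B3 → GTree E (fun _ => XorZero) (fun _ => B3))
    (hc : ∀ y, (child y).complete (rem.erase e)) (U V W : Set (E → Bool)) :
    12 * PrOf ((GTree.node2 e child).mass massXor massAll) (CoordEvent₃ U V W)
      = ∑ y : B3, (1/8 : ℝ) * PrOf ((child y).mass massXor massAll)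
          (CoordEvent₃ (condS U e y.1) (condS V e y.2.1) (condS W e y.2.2)) := by
  rw [PrOf, ← sum_update
    (fun C => (CoordEvent₃ U V W).indicator ((GTree.node2 e child).mass massXor massAll) C) e,
    Fintype.sum_sum_type]
  have hinl : ∀ x : XorZero, ∑ C : E → Val, (CoordEvent₃ U V W).indicator
      ((GTree.node2 e child).mass massXor massAll) (Function.update C e (Sum.inl x)) = 0 := by
    intro x
    refine Finset.sum_eq_zero fun C _ => ?_
    by_cases h : Function.update C e (Sum.inl x) ∈ CoordEvent₃ U V W
    · rw [Set.indicator_of_mem h]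
      simp [GTree.mass]
    · rw [Set.indicator_of_notMem h]
  rw [Finset.sum_congr rfl fun x (_ : x ∈ Finset.univ) => hinl x, Finset.sum_const_zero, zero_add]
  refine Finset.sum_congr rfl fun y _ => ?_
  rw [PrOf, Finset.mul_sum]
  refine Finset.sum_congr rfl fun C _ => ?_
  by_cases h : Function.update C e (Sum.inr y) ∈ CoordEvent₃ U V W
  · rw [Set.indicator_of_mem h,
      Set.indicator_of_mem (show C ∈ _ from (mem_CE_update_inr C e y).1 h)]
    simp only [GTree.mass, Function.update_self]
    rw [mass_update_of_complete (child y) (rem.erase e) (hc y) e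
      (Finset.notMem_erase e rem) C (Sum.inr y)]
    norm_num [massAll]
  · rw [Set.indicator_of_notMem h,
      Set.indicator_of_notMem
        (fun hcon => h ((mem_CE_update_inr C e y).2 hcon))]
    ring

/-- `{0,1}²` parametrizes the xor-zero triples. -/
def toXor (b : Bool × Bool) : XorZero :=
  ⟨(b.1, b.2, xor b.1 b.2), by rcases b with ⟨a, c⟩; cases a <;> cases c <;> rfl⟩

def xorEquiv : (Bool × Bool) ≃ XorZero where
  toFun := toXor
  invFun x := (x.1.1, x.1.2.1)
  left_inv b := rfl
  right_inv x := by
    rcases x with ⟨⟨a, c, d⟩, hx⟩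
    cases a <;> cases c <;> cases d <;> first | rfl | simp at hx
  
lemma indicator_CE_eq (A B D : Set (E → Bool)) (w : (E → Val) → ℝ) (C : E → Val) :
    (CoordEvent₃ A B D).indicator w C =
      (if (fun e => (bits (C e)).1) ∈ A then (1:ℝ) else 0) *
      ((if (fun e => (bits (C e)).2.1) ∈ B then (1:ℝ) else 0) *
      ((if (fun e => (bits (C e)).2.2) ∈ D then (1:ℝ) else 0) * w C)) := by
  classical
  by_cases hA : (fun e => (bits (C e)).1) ∈ A <;>
    by_cases hB : (fun e => (bits (C e)).2.1) ∈ B <;>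
      by_cases hD : (fun e => (bits (C e)).2.2) ∈ D <;>
        simp [Set.indicator, CoordEvent₃, Set.mem_setOf_eq, hA, hB, hD]

lemma ite_nonneg' (p : Prop) [Decidable p] : (0:ℝ) ≤ if p then 1 else 0 := by
  split <;> norm_num

lemma ite_mono' {p q : Prop} [Decidable p] [Decidable q] (h : p → q) :
    (if p then (1:ℝ) else 0) ≤ if q then 1 else 0 := by
  by_cases hp : p
  · simp [hp, h hp]
  · simp [hp, ite_nonneg' q]

lemma cube (a0 a1 b0 b1 c0 c1 w : ℝ) (ha0 : 0 ≤ a0) (ha : a0 ≤ a1)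
    (hb0 : 0 ≤ b0) (hb : b0 ≤ b1) (hc0 : 0 ≤ c0) (hc : c0 ≤ c1) (hw : 0 ≤ w) :
    1/4 * (a0 * (b0 * (c0 * w))) + (1/4 * (a0 * (b1 * (c1 * w))) +
      (1/4 * (a1 * (b0 * (c1 * w))) + 1/4 * (a1 * (b1 * (c0 * w)))))
    ≤ 1/8 * (a1 * (b1 * (c1 * w))) + (1/8 * (a1 * (b1 * (c0 * w))) +
      (1/8 * (a1 * (b0 * (c1 * w))) + (1/8 * (a1 * (b0 * (c0 * w))) +
      (1/8 * (a0 * (b1 * (c1 * w))) + (1/8 * (a0 * (b1 * (c0 * w))) +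
      (1/8 * (a0 * (b0 * (c1 * w))) + 1/8 * (a0 * (b0 * (c0 * w))))))))) := by
  nlinarith [mul_nonneg (mul_nonneg (mul_nonneg (sub_nonneg.2 ha) (sub_nonneg.2 hb))
    (sub_nonneg.2 hc)) hw]

/-- The key single-edge inequality. -/
lemma key_ineq (w : (E → Val) → ℝ) (hw : ∀ C, 0 ≤ w C)
    {U V W : Set (E → Bool)} (hU : UpwardClosed U) (hV : UpwardClosed V)
    (hW : UpwardClosed W) (e : E) :
    ∑ x : XorZero, (1/4 : ℝ) *
        PrOf w (CoordEvent₃ (condS U e x.1.1) (condS V e x.1.2.1) (condS W e x.1.2.2))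
      ≤ ∑ y : B3, (1/8 : ℝ) *
        PrOf w (CoordEvent₃ (condS U e y.1) (condS V e y.2.1) (condS W e y.2.2)) := by
  classical
  simp only [PrOf, Finset.mul_sum]
  rw [Finset.sum_comm]
  conv_rhs => rw [Finset.sum_comm]
  refine Finset.sum_le_sum fun C _ => ?_
  rw [← Equiv.sum_comp xorEquiv (fun x : XorZero => (1/4 : ℝ) *
    (CoordEvent₃ (condS U e x.1.1) (condS V e x.1.2.1) (condS W e x.1.2.2)).indicator w C)]
  simp only [Fintype.sum_prod_type, Fintype.sum_bool, show ∀ b, xorEquiv b = toXor b from fun _ => rfl, toXor,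
    Bool.xor_false, Bool.xor_true, Bool.true_xor, Bool.false_xor, Bool.not_true, Bool.not_false,
    indicator_CE_eq]
  have H := cube
    (if (fun e' => (bits (C e')).1) ∈ condS U e false then (1:ℝ) else 0)
    (if (fun e' => (bits (C e')).1) ∈ condS U e true then (1:ℝ) else 0)
    (if (fun e' => (bits (C e')).2.1) ∈ condS V e false then (1:ℝ) else 0)
    (if (fun e' => (bits (C e')).2.1) ∈ condS V e true then (1:ℝ) else 0)
    (if (fun e' => (bits (C e')).2.2) ∈ condS W e false then (1:ℝ) else 0)
    (if (fun e' => (bits (C e')).2.2) ∈ condS W e true then (1:ℝ) else 0)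
    (w C)
    (ite_nonneg' _) (ite_mono' fun h => condS_mono hU e h)
    (ite_nonneg' _) (ite_mono' fun h => condS_mono hV e h)
    (ite_nonneg' _) (ite_mono' fun h => condS_mono hW e h) (hw C)
  linarith [H]

/-- Main induction: the tree probability is sandwiched between the all-`μ₁` and
all-`μ₂` probabilities, for any remaining edge set. -/
lemma main_ineq (T : GTree E (fun _ => XorZero) (fun _ => B3)) :
    ∀ rem : Finset E, T.complete rem → ∀ U V W : Set (E → Bool),
      UpwardClosed U → UpwardClosed V → UpwardClosed W →
      PrOf (wOf m1e rem) (CoordEvent₃ U V W)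
          ≤ PrOf (T.mass massXor massAll) (CoordEvent₃ U V W) ∧
        PrOf (T.mass massXor massAll) (CoordEvent₃ U V W)
          ≤ PrOf (wOf m2e rem) (CoordEvent₃ U V W) := by
  induction T with
  | leaf =>
      intro rem hrem U V W _ _ _
      have hrem' : rem = ∅ := hrem
      subst hrem'
      have h1 : wOf (E := E) m1e ∅ = GTree.mass massXor massAll GTree.leaf := by
        funext C; simp [wOf, GTree.mass]
      have h2 : wOf (E := E) m2e ∅ = GTree.mass massXor massAll GTree.leaf := by
        funext C; simp [wOf, GTree.mass]
      rw [h1, h2]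
      exact ⟨le_refl _, le_refl _⟩
  | node1 e child ih =>
      intro rem hrem U V W hU hV hW
      obtain ⟨he, hc⟩ := hrem
      have h12 : (0:ℝ) < 12 := by norm_num
      have ihall := fun (x : XorZero) =>
        ih x (rem.erase e) (hc x) (condS U e x.1.1) (condS V e x.1.2.1) (condS W e x.1.2.2)
          (condS_upward hU e x.1.1) (condS_upward hV e x.1.2.1) (condS_upward hW e x.1.2.2)
      constructor
      · rw [← mul_le_mul_iff_of_pos_left h12, step m1e he U V W, step_node1 e child hc U V W,
          Fintype.sum_sum_type]
        simp only [m1e, Sum.elim_inl, Sum.elim_inr, zero_mul, Finset.sum_const_zero,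
          add_zero, bits_inl]
        exact Finset.sum_le_sum fun x _ =>
          mul_le_mul_of_nonneg_left (ihall x).1 (by norm_num)
      · rw [← mul_le_mul_iff_of_pos_left h12, step m2e he U V W, step_node1 e child hc U V W]
        calc ∑ x : XorZero, (1/4 : ℝ) * PrOf ((child x).mass massXor massAll)
              (CoordEvent₃ (condS U e x.1.1) (condS V e x.1.2.1) (condS W e x.1.2.2))
            ≤ ∑ x : XorZero, (1/4 : ℝ) * PrOf (wOf m2e (rem.erase e))
              (CoordEvent₃ (condS U e x.1.1) (condS V e x.1.2.1) (condS W e x.1.2.2)) :=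
              Finset.sum_le_sum fun x _ =>
                mul_le_mul_of_nonneg_left (ihall x).2 (by norm_num)
          _ ≤ ∑ y : B3, (1/8 : ℝ) * PrOf (wOf m2e (rem.erase e))
              (CoordEvent₃ (condS U e y.1) (condS V e y.2.1) (condS W e y.2.2)) :=
              key_ineq _ (wOf_nonneg m2e_nonneg _) hU hV hW e
          _ = ∑ v : Val, m2e v * PrOf (wOf m2e (rem.erase e))
              (CoordEvent₃ (condS U e (bits v).1) (condS V e (bits v).2.1)
                (condS W e (bits v).2.2)) := by
              rw [Fintype.sum_sum_type]
              simp only [m2e, Sum.elim_inl, Sum.elim_inr, zero_mul, Finset.sum_const_zero,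
                zero_add, bits_inr]
  | node2 e child ih =>
      intro rem hrem U V W hU hV hW
      obtain ⟨he, hc⟩ := hrem
      have h12 : (0:ℝ) < 12 := by norm_num
      have ihall := fun (y : B3) =>
        ih y (rem.erase e) (hc y) (condS U e y.1) (condS V e y.2.1) (condS W e y.2.2)
          (condS_upward hU e y.1) (condS_upward hV e y.2.1) (condS_upward hW e y.2.2)
      constructor
      · rw [← mul_le_mul_iff_of_pos_left h12, step m1e he U V W, step_node2 e child hc U V W]
        calc ∑ v : Val, m1e v * PrOf (wOf m1e (rem.erase e))
              (CoordEvent₃ (condS U e (bits v).1) (condS V e (bits v).2.1)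
                (condS W e (bits v).2.2))
            = ∑ x : XorZero, (1/4 : ℝ) * PrOf (wOf m1e (rem.erase e))
              (CoordEvent₃ (condS U e x.1.1) (condS V e x.1.2.1) (condS W e x.1.2.2)) := by
              rw [Fintype.sum_sum_type]
              simp only [m1e, Sum.elim_inl, Sum.elim_inr, zero_mul, Finset.sum_const_zero,
                add_zero, bits_inl]
          _ ≤ ∑ y : B3, (1/8 : ℝ) * PrOf (wOf m1e (rem.erase e))
              (CoordEvent₃ (condS U e y.1) (condS V e y.2.1) (condS W e y.2.2)) :=
              key_ineq _ (wOf_nonneg m1e_nonneg _) hU hV hW e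
          _ ≤ ∑ y : B3, (1/8 : ℝ) * PrOf ((child y).mass massXor massAll)
              (CoordEvent₃ (condS U e y.1) (condS V e y.2.1) (condS W e y.2.2)) :=
              Finset.sum_le_sum fun y _ =>
                mul_le_mul_of_nonneg_left (ihall y).1 (by norm_num)
      · rw [← mul_le_mul_iff_of_pos_left h12, step m2e he U V W, step_node2 e child hc U V W,
          Fintype.sum_sum_type]
        simp only [m2e, Sum.elim_inl, Sum.elim_inr, zero_mul, Finset.sum_const_zero,
          zero_add, bits_inr]
        exact Finset.sum_le_sum fun y _ =>
          mul_le_mul_of_nonneg_left (ihall y).2 (by norm_num)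

end Aux

/-- Decision tree colored-percolation inequality:
`P(C₁ ∈ U×V×W) ≤ P(C ∈ U×V×W) ≤ P(C₂ ∈ U×V×W)`. -/
theorem colored_inequality
    (U V W : Set (E → Bool))
    (hU : UpwardClosed U) (hV : UpwardClosed V) (hW : UpwardClosed W)
    (T : GTree E (fun _ => XorZero) (fun _ => B3)) (hT : T.complete Finset.univ) :
    PrOf (mass1 (massXor (E := E))) (CoordEvent₃ U V W)
        ≤ PrOf (T.mass massXor massAll) (CoordEvent₃ U V W) ∧
      PrOf (T.mass massXor massAll) (CoordEvent₃ U V W)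
        ≤ PrOf (mass2 (massAll (E := E))) (CoordEvent₃ U V W) := by
  have h := main_ineq T Finset.univ hT U V W hU hV hW
  rw [mass1_eq, mass2_eq]
  exact h

end GenDT
end

section
/- Let G=(V,E) be a locally finite connected simple graph with Bernoulli bond percolation and let a,b∈V be distinct vertices. For n≥1, let ab^{□n} denote the event that there exist n pairwise edge-disjoint paths from a to b all of whose edges are open. Then for all n,m≥1, P(ab^{□(n+m)}) ≤ P(ab^{□n})·P(ab^{□m}). -/
open MeasureTheory
open scoped ENNReal

namespace PercG

variable {V : Type*} (G : SimpleGraph V)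

/-- The spanning subgraph of `G` whose edges are the open edges of the
configuration `C`. -/
def openSubgraph (C : G.edgeSet → Bool) : SimpleGraph V :=
  SimpleGraph.fromEdgeSet {s | ∃ h : s ∈ G.edgeSet, C ⟨s, h⟩ = true}

/-- The event that `a` and `b` lie in the same open cluster. -/
def conn (a b : V) : Set (G.edgeSet → Bool) :=
  {C | (openSubgraph G C).Reachable a b}

/-- `μ` is the Bernoulli bond percolation measure with edge probabilities `p`:
it gives every cylinder event the corresponding product probability. -/
def IsBernoulliPercolation (p : G.edgeSet → ℝ) (μ : Measure (G.edgeSet → Bool)) : Prop :=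
  ∀ (s : Finset G.edgeSet) (f : G.edgeSet → Bool),
    μ {C | ∀ e ∈ s, C e = f e} =
      ∏ e ∈ s, ENNReal.ofReal (if f e then p e else 1 - p e)

/-- The event `ab^{□n}`: there exist `n` pairwise edge-disjoint paths from `a` to `b`
all of whose edges are open. -/
def nConn (a b : V) (n : ℕ) : Set (G.edgeSet → Bool) :=
  {C | ∃ P : Fin n → G.Walk a b,
        (∀ i, (P i).IsPath) ∧
        (∀ i, ∀ e ∈ (P i).edges, ∀ h : e ∈ G.edgeSet, C ⟨e, h⟩ = true) ∧
        (∀ i j, i ≠ j → ∀ e, e ∈ (P i).edges → e ∉ (P j).edges)}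


section BK

variable {κ : Type*} [Fintype κ] [DecidableEq κ]

open Classical in
/-- weighted counting measure of a set of configurations -/
noncomputable def nuW (w : κ → Bool → ℝ) (A : Set (κ → Bool)) : ℝ :=
  ∑ g : κ → Bool, if g ∈ A then ∏ i, w i (g i) else 0

def Incr (A : Set (κ → Bool)) : Prop :=
  ∀ ⦃g h : κ → Bool⦄, (∀ i, g i = true → h i = true) → g ∈ A → h ∈ A

def DisjOcc (A B : Set (κ → Bool)) : Set (κ → Bool) :=
  {g | ∃ σ τ : κ → Bool, σ ∈ A ∧ τ ∈ B ∧ (∀ i, σ i = true → g i = true) ∧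
    (∀ i, τ i = true → g i = true) ∧ ∀ i, ¬(σ i = true ∧ τ i = true)}

open Classical in
noncomputable def nu2W (w : κ → Bool → ℝ) (A : Set (κ → Bool × Bool)) : ℝ :=
  ∑ g : κ → Bool × Bool, if g ∈ A then ∏ i, w i (g i).1 * w i (g i).2 else 0

def DisjJ (J : Finset κ) (A B : Set (κ → Bool)) : Set (κ → Bool × Bool) :=
  {g | ∃ σ τ : κ → Bool, σ ∈ A ∧ τ ∈ B ∧ (∀ i, σ i = true → (g i).1 = true) ∧
    (∀ i, τ i = true → (if i ∈ J then (g i).2 else (g i).1) = true) ∧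
    ∀ i ∉ J, ¬(σ i = true ∧ τ i = true)}

lemma sum_weights_one (w : κ → Bool → ℝ) (h1 : ∀ i, w i false + w i true = 1) :
    ∑ g : κ → Bool, ∏ i, w i (g i) = 1 := by
  classical
  rw [← Fintype.piFinset_univ, ← Finset.prod_univ_sum]
  rw [Finset.prod_eq_one]
  intro i _
  simpa [add_comm] using h1 i

lemma nuW_nonneg (w : κ → Bool → ℝ) (hw0 : ∀ i b, 0 ≤ w i b) (A : Set (κ → Bool)) :
    0 ≤ nuW w A := by
  classical
  refine Finset.sum_nonneg fun g _ => ?_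
  split
  · exact Finset.prod_nonneg fun i _ => hw0 i _
  · exact le_refl 0

lemma nu2W_empty (w : κ → Bool → ℝ) (h1 : ∀ i, w i false + w i true = 1)
    (A B : Set (κ → Bool)) :
    nu2W w (DisjJ ∅ A B) = nuW w (DisjOcc A B) := by
  classical
  have hset : ∀ g : κ → Bool × Bool,
      g ∈ DisjJ ∅ A B ↔ (fun i => (g i).1) ∈ DisjOcc A B := by
    intro g
    constructor
    · rintro ⟨σ, τ, hσA, hτB, hσ, hτ, hd⟩
      exact ⟨σ, τ, hσA, hτB, hσ, fun i hi => by simpa using hτ i hi,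
        fun i => hd i (Finset.notMem_empty i)⟩
    · rintro ⟨σ, τ, hσA, hτB, hσ, hτ, hd⟩
      exact ⟨σ, τ, hσA, hτB, hσ, fun i hi => by simpa using hτ i hi, fun i _ => hd i⟩
  unfold nu2W
  rw [← Equiv.sum_comp (Equiv.arrowProdEquivProdArrow κ (fun _ => Bool) (fun _ => Bool)).symm]
  rw [Fintype.sum_prod_type]
  have : ∀ u v : κ → Bool,
      (if (Equiv.arrowProdEquivProdArrow κ (fun _ => Bool) (fun _ => Bool)).symm (u, v) ∈ DisjJ ∅ A B then
        ∏ i, w i (((Equiv.arrowProdEquivProdArrow κ (fun _ => Bool) (fun _ => Bool)).symm (u, v)) i).1 *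
          w i (((Equiv.arrowProdEquivProdArrow κ (fun _ => Bool) (fun _ => Bool)).symm (u, v)) i).2 else 0)
      = (if u ∈ DisjOcc A B then ∏ i, w i (u i) else 0) * ∏ i, w i (v i) := by
    intro u v
    rw [hset]
    simp only [Equiv.arrowProdEquivProdArrow]
    rw [Finset.prod_mul_distrib]
    by_cases h : (fun i => u i) ∈ DisjOcc A B <;> simp [h]
  simp only [this]
  rw [← Finset.sum_mul_sum]
  rw [sum_weights_one w h1, mul_one]
  rfl

lemma nu2W_full (w : κ → Bool → ℝ) (h1 : ∀ i, w i false + w i true = 1)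
    (A B : Set (κ → Bool)) (hA : Incr A) (hB : Incr B) :
    nu2W w (DisjJ Finset.univ A B) = nuW w A * nuW w B := by
  classical
  have hset : ∀ g : κ → Bool × Bool,
      g ∈ DisjJ Finset.univ A B ↔
        ((fun i => (g i).1) ∈ A ∧ (fun i => (g i).2) ∈ B) := by
    intro g
    constructor
    · rintro ⟨σ, τ, hσA, hτB, hσ, hτ, hd⟩
      refine ⟨hA hσ hσA, hB (fun i hi => ?_) hτB⟩
      simpa using hτ i hi
    · rintro ⟨hgA, hgB⟩
      exact ⟨fun i => (g i).1, fun i => (g i).2, hgA, hgB, fun i h => h,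
        fun i hi => by simpa using hi, fun i hi => absurd (Finset.mem_univ i) hi⟩
  unfold nu2W
  rw [← Equiv.sum_comp (Equiv.arrowProdEquivProdArrow κ (fun _ => Bool) (fun _ => Bool)).symm]
  rw [Fintype.sum_prod_type]
  have : ∀ u v : κ → Bool,
      (if (Equiv.arrowProdEquivProdArrow κ (fun _ => Bool) (fun _ => Bool)).symm (u, v) ∈ DisjJ Finset.univ A B then
        ∏ i, w i (((Equiv.arrowProdEquivProdArrow κ (fun _ => Bool) (fun _ => Bool)).symm (u, v)) i).1 *
          w i (((Equiv.arrowProdEquivProdArrow κ (fun _ => Bool) (fun _ => Bool)).symm (u, v)) i).2 else 0)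
      = (if u ∈ A then ∏ i, w i (u i) else 0) * (if v ∈ B then ∏ i, w i (v i) else 0) := by
    intro u v
    rw [hset]
    simp only [Equiv.arrowProdEquivProdArrow]
    rw [Finset.prod_mul_distrib]
    by_cases hu : (fun i => u i) ∈ A <;> by_cases hv : (fun i => v i) ∈ B <;> simp [hu, hv]
  simp only [this]
  rw [← Finset.sum_mul_sum]
  rfl

def mkFn (i : κ) (v : Bool × Bool) (r : {j // j ≠ i} → Bool × Bool) : κ → Bool × Bool :=
  fun j => if h : j = i then v else r ⟨j, h⟩

@[simp] lemma mkFn_self (i : κ) (v r) : mkFn i v r i = v := dif_pos rfl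

lemma mkFn_ne (i : κ) (v r) {j : κ} (h : j ≠ i) : mkFn i v r j = r ⟨j, h⟩ := dif_neg h

def splitEquiv (i : κ) : (({j // j ≠ i} → Bool × Bool) × (Bool × Bool)) ≃ (κ → Bool × Bool) where
  toFun p := mkFn i p.2 p.1
  invFun g := (fun j => g j.1, g i)
  left_inv p := by
    ext j
    · exact congrArg Prod.fst (mkFn_ne i p.2 p.1 j.2)
    · exact congrArg Prod.snd (mkFn_ne i p.2 p.1 j.2)
    · exact congrArg Prod.fst (mkFn_self i p.2 p.1)
    · exact congrArg Prod.snd (mkFn_self i p.2 p.1)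
  right_inv g := by
    funext j
    by_cases h : j = i
    · subst h; exact mkFn_self j _ _
    · exact mkFn_ne i _ _ h

lemma sum_split (i : κ) (F : (κ → Bool × Bool) → ℝ) :
    ∑ g : κ → Bool × Bool, F g
      = ∑ r : {j // j ≠ i} → Bool × Bool, ∑ v : Bool × Bool, F (mkFn i v r) := by
  rw [← Equiv.sum_comp (splitEquiv i) F, Fintype.sum_prod_type]
  rfl

lemma prod_mkFn (i : κ) (f : κ → Bool × Bool → ℝ) (v r) :
    ∏ j, f j (mkFn i v r j) = f i v * ∏ j : {j // j ≠ i}, f j.1 (r j) := by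
  classical
  rw [← Finset.mul_prod_erase Finset.univ _ (Finset.mem_univ i), mkFn_self]
  congr 1
  rw [Finset.prod_subtype (p := fun j => j ≠ i) (Finset.univ.erase i)
    (fun x => by simp [Finset.mem_erase]) (fun j => f j (mkFn i v r j))]
  exact Finset.prod_congr rfl fun j _ => by rw [mkFn_ne i v r j.2]

lemma nu2W_step (w : κ → Bool → ℝ) (hw0 : ∀ i b, 0 ≤ w i b)
    (A B : Set (κ → Bool)) {J : Finset κ} {i : κ} (hi : i ∉ J) :
    nu2W w (DisjJ J A B) ≤ nu2W w (DisjJ (insert i J) A B) := by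
  classical
  have hsplit : ∀ S : Set (κ → Bool × Bool),
      nu2W w S = ∑ r : {j // j ≠ i} → Bool × Bool,
        (∏ j : {j // j ≠ i}, (w j.1 (r j).1 * w j.1 (r j).2)) *
        ∑ v : Bool × Bool, (if mkFn i v r ∈ S then w i v.1 * w i v.2 else 0) := by
    intro S
    unfold nu2W
    rw [sum_split i]
    refine Finset.sum_congr rfl fun r _ => ?_
    rw [Finset.mul_sum]
    refine Finset.sum_congr rfl fun v _ => ?_
    by_cases h : mkFn i v r ∈ S
    · rw [if_pos h, if_pos h, prod_mkFn i (fun j vv => w j vv.1 * w j vv.2) v r]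
      ring
    · simp [h]
  rw [hsplit, hsplit]
  refine Finset.sum_le_sum fun r _ => ?_
  refine mul_le_mul_of_nonneg_left ?_
    (Finset.prod_nonneg fun j _ => mul_nonneg (hw0 _ _) (hw0 _ _))
  set q := w i false with hqdef
  set p := w i true with hpdef
  have hq : 0 ≤ q := hw0 i false
  have hp : 0 ≤ p := hw0 i true
  -- auxiliary predicates describing witnesses away from coordinate i
  let Cnd : (κ → Bool) → (κ → Bool) → Prop := fun σ τ =>
    σ ∈ A ∧ τ ∈ B ∧ (∀ j (h : j ≠ i), σ j = true → (r ⟨j, h⟩).1 = true) ∧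
    (∀ j (h : j ≠ i), τ j = true → (if j ∈ J then (r ⟨j, h⟩).2 else (r ⟨j, h⟩).1) = true) ∧
    (∀ j, j ∉ J → j ≠ i → ¬(σ j = true ∧ τ j = true))
  let X : Prop := ∃ σ τ, Cnd σ τ ∧ σ i = false ∧ τ i = false
  let Y : Prop := ∃ σ τ, Cnd σ τ ∧ τ i = false
  let Z : Prop := ∃ σ τ, Cnd σ τ ∧ σ i = false
  have hXY : X → Y := fun ⟨σ, τ, hc, _, h2⟩ => ⟨σ, τ, hc, h2⟩
  have hXZ : X → Z := fun ⟨σ, τ, hc, h1, _⟩ => ⟨σ, τ, hc, h1⟩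
  -- forward translation
  have hfwd : ∀ v, mkFn i v r ∈ DisjJ J A B → (Y ∨ Z) ∧ (v.1 = false → X) := by
    rintro v ⟨σ, τ, hσA, hτB, hσ, hτ, hd⟩
    have hCnd : Cnd σ τ := by
      refine ⟨hσA, hτB, fun j h hj => ?_, fun j h hj => ?_, fun j hj hne => hd j hj⟩
      · have := hσ j hj; rwa [mkFn_ne i v r h] at this
      · have := hτ j hj; rwa [mkFn_ne i v r h] at this
    have hdi := hd i hi
    constructor
    · by_cases hτi : τ i = true
      · have hσi : σ i = false := by
          cases hσi : σ i with
          | false => rfl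
          | true => exact absurd ⟨hσi, hτi⟩ hdi
        exact Or.inr ⟨σ, τ, hCnd, hσi⟩
      · exact Or.inl ⟨σ, τ, hCnd, by simpa using hτi⟩
    · intro hv1
      have hσi : σ i = false := by
        cases hσi : σ i with
        | false => rfl
        | true =>
          have := hσ i hσi
          rw [mkFn_self, hv1] at this
          exact absurd this (by simp)
      have hτi : τ i = false := by
        cases hτi : τ i with
        | false => rfl
        | true =>
          have := hτ i hτi
          rw [if_neg hi, mkFn_self, hv1] at this
          exact absurd this (by simp)
      exact ⟨σ, τ, hCnd, hσi, hτi⟩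
  -- backward translations into `DisjJ (insert i J)`
  have hback : ∀ (σ τ : κ → Bool), Cnd σ τ → ∀ v : Bool × Bool,
      (σ i = true → v.1 = true) → (τ i = true → v.2 = true) →
      mkFn i v r ∈ DisjJ (insert i J) A B := by
    rintro σ τ ⟨hσA, hτB, hσc, hτc, hdc⟩ v hσv hτv
    refine ⟨σ, τ, hσA, hτB, ?_, ?_, ?_⟩
    · intro j hj
      by_cases h : j = i
      · subst h; rw [mkFn_self]; exact hσv hj
      · rw [mkFn_ne i v r h]; exact hσc j h hj
    · intro j hj
      by_cases h : j = i
      · subst h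
        rw [if_pos (Finset.mem_insert_self _ _), mkFn_self]
        exact hτv hj
      · rw [mkFn_ne i v r h]
        have hJ : j ∈ insert i J ↔ j ∈ J := by simp [Finset.mem_insert, h]
        rw [if_congr hJ rfl rfl]
        exact hτc j h hj
    · intro j hj
      have hjJ : j ∉ J := fun hh => hj (Finset.mem_insert_of_mem hh)
      have hji : j ≠ i := fun hh => hj (hh ▸ Finset.mem_insert_self i J)
      exact hdc j hjJ hji
  have hX : X → ∀ v : Bool × Bool, mkFn i v r ∈ DisjJ (insert i J) A B := by
    rintro ⟨σ, τ, hc, h1, h2⟩ v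
    exact hback σ τ hc v (fun hh => absurd hh (by simp [h1])) (fun hh => absurd hh (by simp [h2]))
  have hY : Y → ∀ v : Bool × Bool, v.1 = true → mkFn i v r ∈ DisjJ (insert i J) A B := by
    rintro ⟨σ, τ, hc, h2⟩ v hv
    exact hback σ τ hc v (fun _ => hv) (fun hh => absurd hh (by simp [h2]))
  have hZ : Z → ∀ v : Bool × Bool, v.2 = true → mkFn i v r ∈ DisjJ (insert i J) A B := by
    rintro ⟨σ, τ, hc, h1⟩ v hv
    exact hback σ τ hc v (fun hh => absurd hh (by simp [h1])) (fun _ => hv)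
  -- expand the sums over the four values of `v`
  have eS : ∀ S : Set (κ → Bool × Bool),
      (∑ v : Bool × Bool, (if mkFn i v r ∈ S then w i v.1 * w i v.2 else 0))
      = ((if mkFn i (true, true) r ∈ S then p * p else 0) +
          (if mkFn i (true, false) r ∈ S then p * q else 0)) +
        ((if mkFn i (false, true) r ∈ S then q * p else 0) +
          (if mkFn i (false, false) r ∈ S then q * q else 0)) := by
    intro S
    rw [Fintype.sum_prod_type]
    simp only [Fintype.sum_bool]
    rfl
  rw [eS, eS]
  have ltt : (if mkFn i (true, true) r ∈ DisjJ J A B then p * p else 0)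
      ≤ (if Y ∨ Z then p * p else 0) := by
    split_ifs with h1 h2
    · exact le_refl _
    · exact absurd (hfwd _ h1).1 h2
    · exact mul_nonneg hp hp
    · exact le_refl _
  have ltf : (if mkFn i (true, false) r ∈ DisjJ J A B then p * q else 0)
      ≤ (if Y ∨ Z then p * q else 0) := by
    split_ifs with h1 h2
    · exact le_refl _
    · exact absurd (hfwd _ h1).1 h2
    · exact mul_nonneg hp hq
    · exact le_refl _
  have lft : (if mkFn i (false, true) r ∈ DisjJ J A B then q * p else 0)
      ≤ (if X then q * p else 0) := by
    split_ifs with h1 h2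
    · exact le_refl _
    · exact absurd ((hfwd _ h1).2 rfl) h2
    · exact mul_nonneg hq hp
    · exact le_refl _
  have lff : (if mkFn i (false, false) r ∈ DisjJ J A B then q * q else 0)
      ≤ (if X then q * q else 0) := by
    split_ifs with h1 h2
    · exact le_refl _
    · exact absurd ((hfwd _ h1).2 rfl) h2
    · exact mul_nonneg hq hq
    · exact le_refl _
  have rtt : (if Y ∨ Z then p * p else 0)
      ≤ (if mkFn i (true, true) r ∈ DisjJ (insert i J) A B then p * p else 0) := by
    split_ifs with h1 h2
    · exact le_refl _
    · rcases h1 with h | h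
      · exact absurd (hY h _ rfl) h2
      · exact absurd (hZ h _ rfl) h2
    · exact mul_nonneg hp hp
    · exact le_refl _
  have rtf : (if Y then p * q else 0)
      ≤ (if mkFn i (true, false) r ∈ DisjJ (insert i J) A B then p * q else 0) := by
    split_ifs with h1 h2
    · exact le_refl _
    · exact absurd (hY h1 _ rfl) h2
    · exact mul_nonneg hp hq
    · exact le_refl _
  have rft : (if Z then q * p else 0)
      ≤ (if mkFn i (false, true) r ∈ DisjJ (insert i J) A B then q * p else 0) := by
    split_ifs with h1 h2
    · exact le_refl _
    · exact absurd (hZ h1 _ rfl) h2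
    · exact mul_nonneg hq hp
    · exact le_refl _
  have rff : (if X then q * q else 0)
      ≤ (if mkFn i (false, false) r ∈ DisjJ (insert i J) A B then q * q else 0) := by
    split_ifs with h1 h2
    · exact le_refl _
    · exact absurd (hX h1 _) h2
    · exact mul_nonneg hq hq
    · exact le_refl _
  have mid : (if Y ∨ Z then p * q else 0) + (if X then q * p else 0)
      ≤ (if Y then p * q else 0) + (if Z then q * p else 0) := by
    have hpq : 0 ≤ p * q := mul_nonneg hp hq
    by_cases hx : X
    · have hy := hXY hx
      have hz := hXZ hx
      simp only [if_pos hx, if_pos hy, if_pos hz, if_pos (Or.inl hy)]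
      linarith [mul_comm q p]
    · by_cases hy : Y
      · simp only [if_neg hx, if_pos hy, if_pos (Or.inl hy), add_zero]
        have : (0:ℝ) ≤ if Z then q * p else 0 := by
          split_ifs
          · exact mul_nonneg hq hp
          · exact le_refl _
        linarith
      · by_cases hz : Z
        · simp only [if_neg hx, if_neg hy, if_pos hz, if_pos (Or.inr hz), add_zero, zero_add]
          linarith [mul_comm p q]
        · simp [hx, hy, hz]
  linarith [ltt, ltf, lft, lff, rtt, rtf, rft, rff, mid]

theorem bk_ineq (w : κ → Bool → ℝ) (hw0 : ∀ i b, 0 ≤ w i b)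
    (hw1 : ∀ i, w i false + w i true = 1)
    (A B : Set (κ → Bool)) (hA : Incr A) (hB : Incr B) :
    nuW w (DisjOcc A B) ≤ nuW w A * nuW w B := by
  classical
  have key : ∀ J : Finset κ, nu2W w (DisjJ ∅ A B) ≤ nu2W w (DisjJ J A B) := by
    intro J
    induction J using Finset.induction_on with
    | empty => exact le_refl _
    | insert _ _ hni ih => exact le_trans ih (nu2W_step w hw0 A B hni)
  have := key Finset.univ
  rwa [nu2W_empty w hw1 A B, nu2W_full w hw1 A B hA hB] at this

lemma nuW_mono (w : κ → Bool → ℝ) (hw0 : ∀ i b, 0 ≤ w i b) {A B : Set (κ → Bool)}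
    (hAB : A ⊆ B) : nuW w A ≤ nuW w B := by
  classical
  refine Finset.sum_le_sum fun g _ => ?_
  by_cases h : g ∈ A
  · rw [if_pos h, if_pos (hAB h)]
  · rw [if_neg h]
    split
    · exact Finset.prod_nonneg fun i _ => hw0 i _
    · exact le_refl _


end BK
open Classical in
noncomputable def extFun (s : Finset G.edgeSet) (g : {x // x ∈ s} → Bool) : G.edgeSet → Bool :=
  fun e => if h : e ∈ s then g ⟨e, h⟩ else false

open Classical in
lemma extFun_mem (s : Finset G.edgeSet) (g : {x // x ∈ s} → Bool) (x : {x // x ∈ s}) :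
    extFun G s g x.1 = g x := by
  simp [extFun, x.2]

open Classical in
lemma measure_of_supported (p : G.edgeSet → ℝ) (μ : Measure (G.edgeSet → Bool))
    (hμ : IsBernoulliPercolation G p μ)
    (s : Finset G.edgeSet) (A : Set (G.edgeSet → Bool))
    (hsupp : ∀ ω ω' : G.edgeSet → Bool, (∀ e ∈ s, ω e = ω' e) → ω ∈ A → ω' ∈ A) :
    μ A = ∑ g : {x // x ∈ s} → Bool,
      if extFun G s g ∈ A then
        ∏ x : {x // x ∈ s}, ENNReal.ofReal (if g x then p x.1 else 1 - p x.1)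
      else 0 := by
  have hA : A = ⋃ g ∈ Finset.univ.filter (fun g : {x // x ∈ s} → Bool => extFun G s g ∈ A),
      {ω : G.edgeSet → Bool | ∀ e ∈ s, ω e = extFun G s g e} := by
    ext ω
    constructor
    · intro hω
      refine Set.mem_iUnion₂.mpr ⟨fun x : {x // x ∈ s} => ω x.1, ?_, ?_⟩
      · refine Finset.mem_coe.mpr (Finset.mem_filter.mpr ⟨Finset.mem_univ _, ?_⟩)
        exact hsupp ω _ (fun e he => by simp [extFun, he]) hω
      · intro e he; simp [extFun, he]
    · intro hω
      rcases Set.mem_iUnion₂.mp hω with ⟨g, hg, hmem⟩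
      exact hsupp (extFun G s g) ω (fun e he => (hmem e he).symm)
        (Finset.mem_filter.mp (Finset.mem_coe.mp hg)).2
  have hdisj : (↑(Finset.univ.filter (fun g : {x // x ∈ s} → Bool => extFun G s g ∈ A)) :
      Set ({x // x ∈ s} → Bool)).PairwiseDisjoint
      (fun g => {ω : G.edgeSet → Bool | ∀ e ∈ s, ω e = extFun G s g e}) := by
    intro g hg g' hg' hne
    refine Set.disjoint_left.mpr fun ω hω hω' => hne ?_
    funext x
    have h1 : ω x.1 = extFun G s g x.1 := hω x.1 x.2
    have h2 : ω x.1 = extFun G s g' x.1 := hω' x.1 x.2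
    rw [← extFun_mem G s g x, ← h1, h2, extFun_mem G s g' x]
  have hmeas : ∀ g ∈ Finset.univ.filter (fun g : {x // x ∈ s} → Bool => extFun G s g ∈ A),
      MeasurableSet {ω : G.edgeSet → Bool | ∀ e ∈ s, ω e = extFun G s g e} := by
    intro g _
    have hrw : {ω : G.edgeSet → Bool | ∀ e ∈ s, ω e = extFun G s g e}
        = ⋂ e ∈ (s : Set G.edgeSet), {ω : G.edgeSet → Bool | ω e = extFun G s g e} := by
      ext ω; simp
    rw [hrw]
    refine MeasurableSet.biInter s.countable_toSet fun e _ => ?_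
    have : MeasurableSet ((fun ω : G.edgeSet → Bool => ω e) ⁻¹' {extFun G s g e}) :=
      (measurable_pi_apply e) (measurableSet_singleton _)
    exact this
  have key : μ A = ∑ g ∈ Finset.univ.filter (fun g : {x // x ∈ s} → Bool => extFun G s g ∈ A),
      μ {ω : G.edgeSet → Bool | ∀ e ∈ s, ω e = extFun G s g e} := by
    conv_lhs => rw [hA]
    exact measure_biUnion_finset hdisj hmeas
  rw [key, Finset.sum_filter]
  refine Finset.sum_congr rfl fun g _ => ?_
  by_cases hmem : extFun G s g ∈ A
  · rw [if_pos hmem, if_pos hmem, hμ s (extFun G s g), ← Finset.prod_coe_sort]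
    refine Finset.prod_congr rfl fun x _ => ?_
    congr 1
    rw [extFun_mem G s g x]
  · rw [if_neg hmem, if_neg hmem]

lemma countable_vertex (hlf : G.LocallyFinite) (hconn : G.Connected) : Countable V := by
  obtain ⟨a⟩ := hconn.nonempty
  let S : ℕ → Set V := fun n => Nat.rec {a} (fun _ Sn => Sn ∪ ⋃ v ∈ Sn, G.neighborSet v) n
  have hfin : ∀ n, (S n).Finite := by
    intro n
    induction n with
    | zero => exact Set.finite_singleton a
    | succ n ih =>
      refine ih.union (Set.Finite.biUnion ih fun v _ => ?_)
      haveI := hlf v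
      exact (G.neighborSet v).toFinite
  have key : ∀ (v : V) (w : G.Walk v a), ∃ n, v ∈ S n := by
    intro v w
    clear hfin
    induction w with
    | nil => exact ⟨0, rfl⟩
    | cons h p ih =>
      obtain ⟨n, hn⟩ := ih
      exact ⟨n + 1, Or.inr (Set.mem_biUnion hn h.symm)⟩
  have hcov : (Set.univ : Set V).Countable := by
    have hsub : (Set.univ : Set V) ⊆ ⋃ n, S n := by
      intro v _
      obtain ⟨w⟩ := (hconn.preconnected v a)
      exact Set.mem_iUnion.mpr (key v w)
    exact ((Set.countable_iUnion fun n => (hfin n).countable).mono hsub)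
  exact Set.countable_univ_iff.mp hcov

def nConnIn (a b : V) (n : ℕ) (s : Finset G.edgeSet) : Set (G.edgeSet → Bool) :=
  {C | ∃ P : Fin n → G.Walk a b,
        (∀ i, (P i).IsPath) ∧
        (∀ i, ∀ e ∈ (P i).edges, ∀ h : e ∈ G.edgeSet,
          (⟨e, h⟩ : G.edgeSet) ∈ s ∧ C ⟨e, h⟩ = true) ∧
        (∀ i j, i ≠ j → ∀ e, e ∈ (P i).edges → e ∉ (P j).edges)}

lemma nConnIn_subset (a b : V) (n : ℕ) (s : Finset G.edgeSet) :
    nConnIn G a b n s ⊆ nConn G a b n := by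
  rintro C ⟨P, h1, h2, h3⟩
  exact ⟨P, h1, fun i e he h => (h2 i e he h).2, h3⟩

lemma nConnIn_mono (a b : V) (n : ℕ) {s t : Finset G.edgeSet} (hst : s ⊆ t) :
    nConnIn G a b n s ⊆ nConnIn G a b n t := by
  rintro C ⟨P, h1, h2, h3⟩
  exact ⟨P, h1, fun i e he h => ⟨hst (h2 i e he h).1, (h2 i e he h).2⟩, h3⟩

lemma nConnIn_supported (a b : V) (n : ℕ) (s : Finset G.edgeSet)
    (ω ω' : G.edgeSet → Bool) (hag : ∀ e ∈ s, ω e = ω' e) :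
    ω ∈ nConnIn G a b n s → ω' ∈ nConnIn G a b n s := by
  rintro ⟨P, h1, h2, h3⟩
  refine ⟨P, h1, fun i e he h => ?_, h3⟩
  obtain ⟨hes, hop⟩ := h2 i e he h
  exact ⟨hes, by rw [← hag _ hes]; exact hop⟩

lemma nConn_eq_iUnion (sq : ℕ → Finset G.edgeSet) (hmono : Monotone sq)
    (hcof : ∀ e : G.edgeSet, ∃ k, e ∈ sq k) (a b : V) (n : ℕ) :
    nConn G a b n = ⋃ k, nConnIn G a b n (sq k) := by
  classical
  ext C
  constructor
  · rintro ⟨P, h1, h2, h3⟩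
    have hUfin : (⋃ i : Fin n,
        (Subtype.val ⁻¹' {e | e ∈ (P i).edges} : Set G.edgeSet)).Finite := by
      refine Set.finite_iUnion fun i => ?_
      exact Set.Finite.preimage (Set.injOn_of_injective Subtype.val_injective)
        ((P i).edges.finite_toSet)
    set T := hUfin.toFinset with hT
    set k := T.sup (fun x => (hcof x).choose) with hk
    refine Set.mem_iUnion.mpr ⟨k, P, h1, ?_, h3⟩
    intro i e he h
    have hx : (⟨e, h⟩ : G.edgeSet) ∈ T :=
      hUfin.mem_toFinset.mpr (Set.mem_iUnion.mpr ⟨i, he⟩)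
    have h1k : (hcof ⟨e, h⟩).choose ≤ k := Finset.le_sup (f := fun x => (hcof x).choose) hx
    exact ⟨hmono h1k (hcof ⟨e, h⟩).choose_spec, h2 i e he h⟩
  · intro hC
    obtain ⟨k, hk⟩ := Set.mem_iUnion.mp hC
    exact nConnIn_subset G a b n (sq k) hk


open Classical in
lemma incr_comb (a b : V) (n : ℕ) (s : Finset G.edgeSet) :
    Incr {g : {x // x ∈ s} → Bool | extFun G s g ∈ nConnIn G a b n s} := by
  rintro g h hgh ⟨P, h1, h2, h3⟩
  refine ⟨P, h1, fun i e he hh => ?_, h3⟩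
  obtain ⟨hes, hop⟩ := h2 i e he hh
  refine ⟨hes, ?_⟩
  have e1 : extFun G s g (⟨⟨e, hh⟩, hes⟩ : {x // x ∈ s}).1 = g ⟨⟨e, hh⟩, hes⟩ :=
    extFun_mem G s g _
  have e2 : extFun G s h (⟨⟨e, hh⟩, hes⟩ : {x // x ∈ s}).1 = h ⟨⟨e, hh⟩, hes⟩ :=
    extFun_mem G s h _
  rw [show (⟨e, hh⟩ : G.edgeSet) = (⟨⟨e, hh⟩, hes⟩ : {x // x ∈ s}).1 from rfl] at hop ⊢
  rw [e2]
  exact hgh _ (by rw [← e1]; exact hop)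

open Classical in
lemma comb_subset_disjOcc (a b : V) (n m : ℕ) (s : Finset G.edgeSet) :
    {g : {x // x ∈ s} → Bool | extFun G s g ∈ nConnIn G a b (n + m) s} ⊆
      DisjOcc {g | extFun G s g ∈ nConnIn G a b n s}
        {g | extFun G s g ∈ nConnIn G a b m s} := by
  rintro g ⟨P, h1, h2, h3⟩
  have hcv : ∀ (i : Fin n) (j : Fin m), Fin.castAdd m i ≠ Fin.natAdd n j := by
    intro i j hc
    have := congrArg Fin.val hc
    simp only [Fin.coe_castAdd, Fin.coe_natAdd] at this
    omega
  refine ⟨fun x => if (∃ i : Fin n, (x.1.1 : Sym2 V) ∈ (P (Fin.castAdd m i)).edges)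
            then true else false,
          fun x => if (∃ j : Fin m, (x.1.1 : Sym2 V) ∈ (P (Fin.natAdd n j)).edges)
            then true else false,
          ?_, ?_, ?_, ?_, ?_⟩
  · refine ⟨fun i => P (Fin.castAdd m i), fun i => h1 _, ?_, ?_⟩
    · intro i e he hh
      obtain ⟨hes, _⟩ := h2 (Fin.castAdd m i) e he hh
      refine ⟨hes, ?_⟩
      rw [show (⟨e, hh⟩ : G.edgeSet) = (⟨⟨e, hh⟩, hes⟩ : {x // x ∈ s}).1 from rfl,
        extFun_mem]
      exact if_pos ⟨i, he⟩
    · intro i j hij e hei hej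
      refine h3 _ _ (fun hc => hij ?_) e hei hej
      exact Fin.ext (by simpa using congrArg Fin.val hc)
  · refine ⟨fun j => P (Fin.natAdd n j), fun j => h1 _, ?_, ?_⟩
    · intro j e he hh
      obtain ⟨hes, _⟩ := h2 (Fin.natAdd n j) e he hh
      refine ⟨hes, ?_⟩
      rw [show (⟨e, hh⟩ : G.edgeSet) = (⟨⟨e, hh⟩, hes⟩ : {x // x ∈ s}).1 from rfl,
        extFun_mem]
      exact if_pos ⟨j, he⟩
    · intro i j hij e hei hej
      refine h3 _ _ (fun hc => hij ?_) e hei hej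
      refine Fin.ext ?_
      have := congrArg Fin.val hc
      simp only [Fin.coe_natAdd] at this
      omega
  · intro x hx
    have hex : ∃ i : Fin n, (x.1.1 : Sym2 V) ∈ (P (Fin.castAdd m i)).edges := by
      by_contra hne
      have hx' : (if (∃ i : Fin n, (x.1.1 : Sym2 V) ∈ (P (Fin.castAdd m i)).edges)
          then true else false) = true := hx
      rw [if_neg hne] at hx'
      exact Bool.false_ne_true hx'
    obtain ⟨i, hei⟩ := hex
    obtain ⟨hes, hop⟩ := h2 (Fin.castAdd m i) x.1.1 hei x.1.2
    rw [← extFun_mem G s g x]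
    exact hop
  · intro x hx
    have hex : ∃ j : Fin m, (x.1.1 : Sym2 V) ∈ (P (Fin.natAdd n j)).edges := by
      by_contra hne
      have hx' : (if (∃ j : Fin m, (x.1.1 : Sym2 V) ∈ (P (Fin.natAdd n j)).edges)
          then true else false) = true := hx
      rw [if_neg hne] at hx'
      exact Bool.false_ne_true hx'
    obtain ⟨j, hej⟩ := hex
    obtain ⟨hes, hop⟩ := h2 (Fin.natAdd n j) x.1.1 hej x.1.2
    rw [← extFun_mem G s g x]
    exact hop
  · rintro x ⟨hxσ, hxτ⟩
    have hexi : ∃ i : Fin n, (x.1.1 : Sym2 V) ∈ (P (Fin.castAdd m i)).edges := by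
      by_contra hne
      have hx' : (if (∃ i : Fin n, (x.1.1 : Sym2 V) ∈ (P (Fin.castAdd m i)).edges)
          then true else false) = true := hxσ
      rw [if_neg hne] at hx'
      exact Bool.false_ne_true hx'
    have hexj : ∃ j : Fin m, (x.1.1 : Sym2 V) ∈ (P (Fin.natAdd n j)).edges := by
      by_contra hne
      have hx' : (if (∃ j : Fin m, (x.1.1 : Sym2 V) ∈ (P (Fin.natAdd n j)).edges)
          then true else false) = true := hxτ
      rw [if_neg hne] at hx'
      exact Bool.false_ne_true hx'
    obtain ⟨i, hei⟩ := hexi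
    obtain ⟨j, hej⟩ := hexj
    exact h3 (Fin.castAdd m i) (Fin.natAdd n j) (hcv i j) x.1.1 hei hej

/-- Submultiplicativity: `P(ab^{□(n+m)}) ≤ P(ab^{□n})·P(ab^{□m})`. -/
theorem nConn_submultiplicative
    (hlf : G.LocallyFinite) (hconn : G.Connected)
    (a b : V) (hab : a ≠ b)
    (p : G.edgeSet → ℝ) (hp : ∀ e, 0 ≤ p e ∧ p e ≤ 1)
    (μ : Measure (G.edgeSet → Bool)) (hprob : IsProbabilityMeasure μ)
    (hμ : IsBernoulliPercolation G p μ)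
    (n m : ℕ) (hn : 1 ≤ n) (hm : 1 ≤ m) :
    μ (nConn G a b (n + m)) ≤ μ (nConn G a b n) * μ (nConn G a b m) := by
  classical
  haveI hcV : Countable V := countable_vertex G hlf hconn
  haveI hcE : Countable G.edgeSet := inferInstance
  obtain ⟨f, hf⟩ := exists_injective_nat G.edgeSet
  have hfin : ∀ k : ℕ, (f ⁻¹' Set.Iio k).Finite := fun k =>
    Set.Finite.preimage (Set.injOn_of_injective hf) (Set.finite_Iio k)
  set sq : ℕ → Finset G.edgeSet := fun k => (hfin k).toFinset with hsq
  have hmono : Monotone sq := by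
    intro k l hkl e he
    have := (hfin k).mem_toFinset.mp he
    exact (hfin l).mem_toFinset.mpr (lt_of_lt_of_le this hkl)
  have hcof : ∀ e : G.edgeSet, ∃ k, e ∈ sq k := fun e =>
    ⟨f e + 1, (hfin _).mem_toFinset.mpr (Nat.lt_succ_self _)⟩
  have hw0 : ∀ (k : ℕ) (x : {x // x ∈ sq k}) (bb : Bool),
      0 ≤ (if bb then p x.1 else 1 - p x.1) := by
    intro k x bb
    cases bb
    · simpa using sub_nonneg.mpr (hp x.1).2
    · simpa using (hp x.1).1
  have hw1 : ∀ (k : ℕ) (x : {x // x ∈ sq k}),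
      (if (false : Bool) then p x.1 else 1 - p x.1) +
        (if (true : Bool) then p x.1 else 1 - p x.1) = 1 := by
    intro k x; simp
  have hconv : ∀ (nn k : ℕ), μ (nConnIn G a b nn (sq k)) =
      ENNReal.ofReal (nuW (fun (x : {x // x ∈ sq k}) (bb : Bool) =>
        if bb then p x.1 else 1 - p x.1)
        {g | extFun G (sq k) g ∈ nConnIn G a b nn (sq k)}) := by
    intro nn k
    rw [measure_of_supported G p μ hμ (sq k) _
      (fun ω ω' hag => nConnIn_supported G a b nn (sq k) ω ω' hag)]
    unfold nuW
    rw [ENNReal.ofReal_sum_of_nonneg]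
    · refine Finset.sum_congr rfl fun g _ => ?_
      simp only [Set.mem_setOf_eq]
      by_cases hmem : extFun G (sq k) g ∈ nConnIn G a b nn (sq k)
      · rw [if_pos hmem, if_pos hmem,
          ENNReal.ofReal_prod_of_nonneg (fun x _ => hw0 k x (g x))]
      · rw [if_neg hmem, if_neg hmem, ENNReal.ofReal_zero]
    · intro g _
      split
      · exact Finset.prod_nonneg fun x _ => hw0 k x (g x)
      · exact le_refl _
  have hstep : ∀ k : ℕ, μ (nConnIn G a b (n + m) (sq k)) ≤
      μ (nConnIn G a b n (sq k)) * μ (nConnIn G a b m (sq k)) := by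
    intro k
    rw [hconv (n + m) k, hconv n k, hconv m k,
      ← ENNReal.ofReal_mul (nuW_nonneg _ (hw0 k) _)]
    refine ENNReal.ofReal_le_ofReal ?_
    refine le_trans (nuW_mono _ (hw0 k) (comb_subset_disjOcc G a b n m (sq k))) ?_
    exact bk_ineq _ (hw0 k) (hw1 k) _ _ (incr_comb G a b n (sq k)) (incr_comb G a b m (sq k))
  rw [nConn_eq_iUnion G sq hmono hcof a b (n + m)]
  rw [Monotone.measure_iUnion (fun k l hkl => nConnIn_mono G a b (n + m) (hmono hkl))]
  refine iSup_le fun k => ?_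
  refine le_trans (hstep k) ?_
  exact mul_le_mul'
    (measure_mono (nConnIn_subset G a b n (sq k)))
    (measure_mono (nConnIn_subset G a b m (sq k)))

end PercG
end
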